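/- Let s > n/2. There exists a constant C = C(s) such that for all u, v in H_h^s(R^n) and all h in (0,1], the product uv belongs to H_h^s(R^n) and ‖uv‖_{H_h^s} ≤ C h^{-n/2} ‖u‖_{H_h^s} ‖v‖_{H_h^s}. -/

import Mathlib

open MeasureTheory Real Set Convolution

open scoped ENNReal NNReal

noncomputable section SobolevAux

namespace SobAux

open ENNReal

variable {n : ℕ}

/-- The weight `⟨hξ⟩² = 1 + h²|ξ|²` as an `ℝ≥0∞`-valued function. -/
def W (h : ℝ) (ξ : EuclideanSpace ℝ (Fin n)) : ℝ≥0∞ :=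
  ENNReal.ofReal (1 + h ^ 2 * ‖ξ‖ ^ 2)

lemma base_pos (h : ℝ) (ξ : EuclideanSpace ℝ (Fin n)) : (0:ℝ) < 1 + h ^ 2 * ‖ξ‖ ^ 2 := by
  positivity

lemma W_ne_zero (h : ℝ) (ξ : EuclideanSpace ℝ (Fin n)) : W h ξ ≠ 0 := by
  simp [W, ENNReal.ofReal_eq_zero, not_le, base_pos h ξ]

lemma W_ne_top (h : ℝ) (ξ : EuclideanSpace ℝ (Fin n)) : W h ξ ≠ ⊤ := ENNReal.ofReal_ne_top

lemma Wpow_ne_top (h p : ℝ) (ξ : EuclideanSpace ℝ (Fin n)) : W h ξ ^ p ≠ ⊤ := by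
  simp [ENNReal.rpow_eq_top_iff, W_ne_zero h ξ, W_ne_top h ξ]

lemma Wpow_ne_zero (h p : ℝ) (ξ : EuclideanSpace ℝ (Fin n)) : W h ξ ^ p ≠ 0 := by
  simp [ENNReal.rpow_eq_zero_iff, W_ne_zero h ξ, W_ne_top h ξ]

lemma measurable_Wpow (h p : ℝ) : Measurable fun ξ : EuclideanSpace ℝ (Fin n) => W h ξ ^ p := by
  apply Continuous.measurable
  exact ENNReal.continuous_rpow_const.comp (ENNReal.continuous_ofReal.comp (by continuity))

/-- core triangle-type inequality for the bracket. -/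
lemma core_sqrt {x y : ℝ} (hx : 0 ≤ x) (hy : 0 ≤ y) :
    Real.sqrt (1 + (x + y) ^ 2) ≤ Real.sqrt (1 + x ^ 2) + Real.sqrt (1 + y ^ 2) := by
  have hA : Real.sqrt (1 + x ^ 2) ^ 2 = 1 + x ^ 2 := Real.sq_sqrt (by positivity)
  have hB : Real.sqrt (1 + y ^ 2) ^ 2 = 1 + y ^ 2 := Real.sq_sqrt (by positivity)
  have hAx : x ≤ Real.sqrt (1 + x ^ 2) := by
    nlinarith [Real.sqrt_nonneg (1 + x ^ 2)]
  have hBy : y ≤ Real.sqrt (1 + y ^ 2) := by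
    nlinarith [Real.sqrt_nonneg (1 + y ^ 2)]
  have h1 : 1 + (x + y) ^ 2 ≤ (Real.sqrt (1 + x ^ 2) + Real.sqrt (1 + y ^ 2)) ^ 2 := by
    nlinarith [Real.sqrt_nonneg (1 + x ^ 2), Real.sqrt_nonneg (1 + y ^ 2),
      mul_le_mul hAx hBy hy (Real.sqrt_nonneg _)]
  calc Real.sqrt (1 + (x + y) ^ 2)
      ≤ Real.sqrt ((Real.sqrt (1 + x ^ 2) + Real.sqrt (1 + y ^ 2)) ^ 2) := Real.sqrt_le_sqrt h1
    _ = Real.sqrt (1 + x ^ 2) + Real.sqrt (1 + y ^ 2) := by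
        rw [Real.sqrt_sq (by positivity)]

/-- from `a ≤ b + c` deduce `a^s ≤ 2^s (b^s + c^s)` for nonneg reals. -/
lemma rpow_add_le {a b c s : ℝ} (hs : 0 ≤ s) (ha : 0 ≤ a) (hb : 0 ≤ b) (hc : 0 ≤ c)
    (h : a ≤ b + c) : a ^ s ≤ 2 ^ s * (b ^ s + c ^ s) := by
  have h1 : a ^ s ≤ (b + c) ^ s := Real.rpow_le_rpow ha h hs
  rcases le_total b c with hbc | hbc
  · calc a ^ s ≤ (b + c) ^ s := h1
      _ ≤ (2 * c) ^ s := Real.rpow_le_rpow (by linarith) (by linarith) hs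
      _ = 2 ^ s * c ^ s := Real.mul_rpow (by norm_num) hc
      _ ≤ 2 ^ s * (b ^ s + c ^ s) := by
          have : (0:ℝ) ≤ b ^ s := Real.rpow_nonneg hb s
          have h2 : (0:ℝ) ≤ (2:ℝ) ^ s := Real.rpow_nonneg (by norm_num) s
          nlinarith
  · calc a ^ s ≤ (b + c) ^ s := h1
      _ ≤ (2 * b) ^ s := Real.rpow_le_rpow (by linarith) (by linarith) hs
      _ = 2 ^ s * b ^ s := Real.mul_rpow (by norm_num) hb
      _ ≤ 2 ^ s * (b ^ s + c ^ s) := by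
          have : (0:ℝ) ≤ c ^ s := Real.rpow_nonneg hc s
          have h2 : (0:ℝ) ≤ (2:ℝ) ^ s := Real.rpow_nonneg (by norm_num) s
          nlinarith

/-- Peetre's inequality, in `ℝ≥0∞`. -/
lemma peetre {s h : ℝ} (hs : 0 ≤ s) (hh : 0 ≤ h) (ξ η : EuclideanSpace ℝ (Fin n)) :
    W h ξ ^ (s/2) ≤ ENNReal.ofReal (2 ^ s) * (W h η ^ (s/2) + W h (ξ - η) ^ (s/2)) := by
  set a : ℝ := 1 + h ^ 2 * ‖ξ‖ ^ 2 with hadef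
  set b : ℝ := 1 + h ^ 2 * ‖η‖ ^ 2 with hbdef
  set c : ℝ := 1 + h ^ 2 * ‖ξ - η‖ ^ 2 with hcdef
  have hapos := base_pos h ξ
  have hbpos := base_pos h η
  have hcpos := base_pos h (ξ - η)
  -- real inequality for the halves
  have key : a ^ (s/2) ≤ 2 ^ s * (b ^ (s/2) + c ^ (s/2)) := by
    have hsqrt : a ^ ((1:ℝ)/2) ≤ b ^ ((1:ℝ)/2) + c ^ ((1:ℝ)/2) := by
      rw [← Real.sqrt_eq_rpow, ← Real.sqrt_eq_rpow, ← Real.sqrt_eq_rpow]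
      have hnorm : ‖ξ‖ ≤ ‖η‖ + ‖ξ - η‖ := by
        calc ‖ξ‖ = ‖η + (ξ - η)‖ := by congr 1; abel
          _ ≤ ‖η‖ + ‖ξ - η‖ := norm_add_le _ _
      have h1 : a ≤ 1 + (h * ‖η‖ + h * ‖ξ - η‖) ^ 2 := by
        have h2 : h * ‖ξ‖ ≤ h * ‖η‖ + h * ‖ξ - η‖ := by
          have := mul_le_mul_of_nonneg_left hnorm hh
          linarith
        have h3 : (h * ‖ξ‖) ^ 2 ≤ (h * ‖η‖ + h * ‖ξ - η‖) ^ 2 := by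
          apply pow_le_pow_left₀ (by positivity) h2
        simp only [hadef]
        nlinarith
      calc Real.sqrt a ≤ Real.sqrt (1 + (h * ‖η‖ + h * ‖ξ - η‖) ^ 2) := Real.sqrt_le_sqrt h1
        _ ≤ Real.sqrt (1 + (h * ‖η‖) ^ 2) + Real.sqrt (1 + (h * ‖ξ - η‖) ^ 2) :=
            core_sqrt (by positivity) (by positivity)
        _ = Real.sqrt b + Real.sqrt c := by
            congr 2 <;> ring
    have hpow := rpow_add_le (a := a ^ ((1:ℝ)/2)) (b := b ^ ((1:ℝ)/2)) (c := c ^ ((1:ℝ)/2))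
      hs (Real.rpow_nonneg hapos.le _) (Real.rpow_nonneg hbpos.le _)
      (Real.rpow_nonneg hcpos.le _) hsqrt
    have ea : (a ^ ((1:ℝ)/2)) ^ s = a ^ (s/2) := by
      rw [← Real.rpow_mul hapos.le]; congr 1; ring
    have eb : (b ^ ((1:ℝ)/2)) ^ s = b ^ (s/2) := by
      rw [← Real.rpow_mul hbpos.le]; congr 1; ring
    have ec : (c ^ ((1:ℝ)/2)) ^ s = c ^ (s/2) := by
      rw [← Real.rpow_mul hcpos.le]; congr 1; ring
    rwa [ea, eb, ec] at hpow
  -- now transfer to ℝ≥0∞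
  have e1 : W h ξ ^ (s/2) = ENNReal.ofReal (a ^ (s/2)) := ENNReal.ofReal_rpow_of_pos hapos
  have e2 : W h η ^ (s/2) = ENNReal.ofReal (b ^ (s/2)) := ENNReal.ofReal_rpow_of_pos hbpos
  have e3 : W h (ξ - η) ^ (s/2) = ENNReal.ofReal (c ^ (s/2)) := ENNReal.ofReal_rpow_of_pos hcpos
  rw [e1, e2, e3, ← ENNReal.ofReal_add (Real.rpow_nonneg hbpos.le _) (Real.rpow_nonneg hcpos.le _),
    ← ENNReal.ofReal_mul (Real.rpow_nonneg (by norm_num) _)]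
  exact ENNReal.ofReal_le_ofReal key

/-- Finiteness of the Japanese bracket integral for `s > n/2`. -/
lemma I1_lt_top {s : ℝ} (hs : (n:ℝ)/2 < s) :
    (∫⁻ ξ : EuclideanSpace ℝ (Fin n), W 1 ξ ^ (-s)) < ⊤ := by
  have hint : Integrable (fun ξ : EuclideanSpace ℝ (Fin n) => ((1:ℝ) + ‖ξ‖ ^ 2) ^ (-(2*s) / 2))
      volume := by
    apply integrable_rpow_neg_one_add_norm_sq
    rw [finrank_euclideanSpace_fin]
    linarith
  have heq : (fun ξ : EuclideanSpace ℝ (Fin n) => W 1 ξ ^ (-s)) =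
      fun ξ => ENNReal.ofReal (((1:ℝ) + ‖ξ‖ ^ 2) ^ (-(2*s)/2)) := by
    funext ξ
    have : (-(2*s)/2 : ℝ) = -s := by ring
    rw [this, W, ← ENNReal.ofReal_rpow_of_pos (by positivity)]
    norm_num
  rw [heq]
  calc (∫⁻ ξ : EuclideanSpace ℝ (Fin n), ENNReal.ofReal (((1:ℝ) + ‖ξ‖ ^ 2) ^ (-(2*s)/2)))
      ≤ ∫⁻ ξ : EuclideanSpace ℝ (Fin n), (‖((1:ℝ) + ‖ξ‖ ^ 2) ^ (-(2*s)/2)‖₊ : ℝ≥0∞) :=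
        lintegral_ofReal_le_lintegral_enorm _
    _ < ⊤ := hint.hasFiniteIntegral

/-- Scaling of the bracket integral. -/
lemma Ih_eq {s h : ℝ} (hh0 : 0 < h) :
    (∫⁻ ξ : EuclideanSpace ℝ (Fin n), W h ξ ^ (-s)) =
      ENNReal.ofReal (h ^ (-(n:ℝ))) * ∫⁻ ξ : EuclideanSpace ℝ (Fin n), W 1 ξ ^ (-s) := by
  have hW : ∀ ξ : EuclideanSpace ℝ (Fin n), W h ξ = W 1 (h • ξ) := by
    intro ξ
    simp only [W]
    congr 1
    rw [norm_smul]
    simp [Real.norm_eq_abs, mul_pow, sq_abs]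
  have hmeas : Measurable fun ξ : EuclideanSpace ℝ (Fin n) => W 1 ξ ^ (-s) :=
    measurable_Wpow 1 (-s)
  have h1 : (∫⁻ ξ : EuclideanSpace ℝ (Fin n), W h ξ ^ (-s)) =
      ∫⁻ ξ : EuclideanSpace ℝ (Fin n), W 1 ξ ^ (-s) ∂(Measure.map (fun ξ => h • ξ) volume) := by
    rw [lintegral_map hmeas (measurable_const_smul h)]
    exact lintegral_congr fun ξ => by rw [hW ξ]
  rw [h1, Measure.map_addHaar_smul volume hh0.ne', lintegral_smul_measure]
  congr 1
  rw [finrank_euclideanSpace_fin]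
  congr 1
  rw [abs_of_nonneg (by positivity)]
  rw [← Real.rpow_natCast h n, ← Real.rpow_neg hh0.le]

/-- a.e.-measurability of a partial Lebesgue integral. -/
lemma aemeasurable_lintegral_right {α β : Type*} [MeasurableSpace α] [MeasurableSpace β]
    {μ : Measure α} {ν : Measure β} [SFinite ν] {f : α × β → ℝ≥0∞}
    (hf : AEMeasurable f (μ.prod ν)) :
    AEMeasurable (fun x => ∫⁻ y, f (x, y) ∂ν) μ := by
  refine ⟨fun x => ∫⁻ y, hf.mk f (x, y) ∂ν, hf.measurable_mk.lintegral_prod_right', ?_⟩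
  filter_upwards [MeasureTheory.Measure.ae_ae_of_ae_prod hf.ae_eq_mk] with x hx using
    lintegral_congr_ae hx

lemma sq_add_le (a b : ℝ≥0∞) : (a + b) ^ 2 ≤ 4 * (a ^ 2 + b ^ 2) := by
  rcases le_total a b with hab | hab
  · calc (a + b) ^ 2 ≤ (b + b) ^ 2 := pow_le_pow_left' (add_le_add_left hab b) 2
      _ = 4 * b ^ 2 := by ring
      _ ≤ 4 * (a ^ 2 + b ^ 2) := by
          apply mul_le_mul_right
          exact le_add_self
  · calc (a + b) ^ 2 ≤ (a + a) ^ 2 := pow_le_pow_left' (add_le_add_right hab a) 2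
      _ = 4 * a ^ 2 := by ring
      _ ≤ 4 * (a ^ 2 + b ^ 2) := by
          apply mul_le_mul_right
          exact le_self_add

lemma rpow_two_eq (x : ℝ≥0∞) : x ^ (2:ℝ) = x ^ (2:ℕ) := by
  rw [← ENNReal.rpow_natCast]; norm_num

lemma sq_half_rpow (x : ℝ≥0∞) : (x ^ ((1:ℝ)/2)) ^ (2:ℕ) = x := by
  rw [← ENNReal.rpow_natCast, ← ENNReal.rpow_mul]
  norm_num

lemma cancel_mul {w a b : ℝ≥0∞} (h0 : w ≠ 0) (ht : w ≠ ⊤) : a * w⁻¹ * (w * b) = a * b := by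
  rw [mul_assoc, ← mul_assoc w⁻¹, ENNReal.inv_mul_cancel h0 ht, one_mul]

lemma cancel_mul' {w a b : ℝ≥0∞} (h0 : w ≠ 0) (ht : w ≠ ⊤) : w⁻¹ * a * (w * b) = b * a := by
  have h1 : w⁻¹ * a * (w * b) = (w⁻¹ * w) * (b * a) := by ring
  rw [h1, ENNReal.inv_mul_cancel h0 ht, one_mul]

/-- translation invariance from the left. -/
lemma lintegral_sub_left {F : EuclideanSpace ℝ (Fin n) → ℝ≥0∞} (hF : AEMeasurable F volume)
    (ξ : EuclideanSpace ℝ (Fin n)) :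
    (∫⁻ η, F (ξ - η)) = ∫⁻ η, F η := by
  have hmg : Measurable (fun t : EuclideanSpace ℝ (Fin n) => ξ - t) := by fun_prop
  conv_rhs => rw [← Measure.map_sub_left_eq_self (volume : Measure (EuclideanSpace ℝ (Fin n))) ξ]
  rw [lintegral_map' (by rwa [Measure.map_sub_left_eq_self]) hmg.aemeasurable]

end SobAux

end SobolevAux

section KeyLemma

open SobAux ENNReal MeasureTheory

/-- The main `ℝ≥0∞`-level estimate. -/
lemma sobolev_key {n : ℕ} {s : ℝ} (hs : (n:ℝ)/2 < s) {h : ℝ} (hh : h ∈ Set.Ioc (0:ℝ) 1)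
    {f g : EuclideanSpace ℝ (Fin n) → ℂ}
    (hf : AEStronglyMeasurable f volume) (hg : AEStronglyMeasurable g volume) :
    (∫⁻ ξ, W h ξ ^ s * (‖(f ⋆[ContinuousLinearMap.mul ℝ ℂ] g) ξ‖₊ : ℝ≥0∞) ^ 2)
      ≤ ENNReal.ofReal ((2:ℝ) ^ s) ^ 2 * 8 * (∫⁻ ζ : EuclideanSpace ℝ (Fin n), W h ζ ^ (-s))
          * (∫⁻ ξ, W h ξ ^ s * (‖f ξ‖₊ : ℝ≥0∞) ^ 2)
          * (∫⁻ ξ, W h ξ ^ s * (‖g ξ‖₊ : ℝ≥0∞) ^ 2) := by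
  have hs0 : 0 ≤ s := le_trans (by positivity) hs.le
  set μ : Measure (EuclideanSpace ℝ (Fin n)) := volume with hμ
  set nf : EuclideanSpace ℝ (Fin n) → ℝ≥0∞ := fun ξ => (‖f ξ‖₊ : ℝ≥0∞) with hnf_def
  set ng : EuclideanSpace ℝ (Fin n) → ℝ≥0∞ := fun ξ => (‖g ξ‖₊ : ℝ≥0∞) with hng_def
  set u : EuclideanSpace ℝ (Fin n) → ℝ≥0∞ := fun ξ => W h ξ ^ (s/2) * nf ξ with hu_def
  set v : EuclideanSpace ℝ (Fin n) → ℝ≥0∞ := fun ξ => W h ξ ^ (s/2) * ng ξ with hv_def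
  set c2 : ℝ≥0∞ := ENNReal.ofReal ((2:ℝ) ^ s) with hc2_def
  have hc2 : c2 ≠ ⊤ := ENNReal.ofReal_ne_top
  have hnf : AEMeasurable nf μ := hf.enorm
  have hng : AEMeasurable ng μ := hg.enorm
  have hu : AEMeasurable u μ := ((measurable_Wpow h (s/2)).aemeasurable).mul hnf
  have hv : AEMeasurable v μ := ((measurable_Wpow h (s/2)).aemeasurable).mul hng
  have hu_fin : ∀ ξ, u ξ ≠ ⊤ := fun ξ =>
    ENNReal.mul_ne_top (Wpow_ne_top h (s/2) ξ) ENNReal.coe_ne_top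
  set A := ∫⁻ ξ, W h ξ ^ s * nf ξ ^ 2 ∂μ with hA_def
  set B := ∫⁻ ξ, W h ξ ^ s * ng ξ ^ 2 ∂μ with hB_def
  set Ih := ∫⁻ ζ : EuclideanSpace ℝ (Fin n), W h ζ ^ (-s) with hIh_def
  have pow_split : ∀ ξ : EuclideanSpace ℝ (Fin n), (W h ξ ^ (s/2)) ^ (2:ℕ) = W h ξ ^ s := by
    intro ξ
    rw [← ENNReal.rpow_natCast (W h ξ ^ (s/2)) 2, ← ENNReal.rpow_mul]
    norm_num
  have hAu : A = ∫⁻ ξ, u ξ ^ 2 ∂μ := by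
    apply lintegral_congr
    intro ξ
    rw [hu_def]
    simp only [mul_pow, pow_split ξ]
  have hBv : B = ∫⁻ ξ, v ξ ^ 2 ∂μ := by
    apply lintegral_congr
    intro ξ
    rw [hv_def]
    simp only [mul_pow, pow_split ξ]
  -- step A : pointwise bound on the convolution
  have conv_le : ∀ ξ, (‖(f ⋆[ContinuousLinearMap.mul ℝ ℂ] g) ξ‖₊ : ℝ≥0∞)
      ≤ ∫⁻ η, nf η * ng (ξ - η) ∂μ := by
    intro ξ
    rw [convolution_def]
    refine le_trans (enorm_integral_le_lintegral_enorm _) (le_of_eq ?_)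
    apply lintegral_congr
    intro η
    simp [ContinuousLinearMap.mul_apply', nnnorm_mul, ENNReal.coe_mul, hnf_def, hng_def]
    rfl
  set T₁ : EuclideanSpace ℝ (Fin n) → ℝ≥0∞ := fun ξ => ∫⁻ η, u η * ng (ξ - η) ∂μ with hT₁_def
  set T₂ : EuclideanSpace ℝ (Fin n) → ℝ≥0∞ := fun ξ => ∫⁻ η, nf η * v (ξ - η) ∂μ with hT₂_def
  have qmp_left : ∀ ξ : EuclideanSpace ℝ (Fin n),
      Measure.QuasiMeasurePreserving (fun η : EuclideanSpace ℝ (Fin n) => ξ - η) μ μ :=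
    fun ξ => (Measure.measurePreserving_sub_left μ ξ).quasiMeasurePreserving
  have hng_left : ∀ ξ, AEMeasurable (fun η => ng (ξ - η)) μ := fun ξ =>
    hng.comp_quasiMeasurePreserving (qmp_left ξ)
  have hv_left : ∀ ξ, AEMeasurable (fun η => v (ξ - η)) μ := fun ξ =>
    hv.comp_quasiMeasurePreserving (qmp_left ξ)
  -- step B : pointwise Peetre estimate
  have step1 : ∀ ξ, W h ξ ^ (s/2) * (‖(f ⋆[ContinuousLinearMap.mul ℝ ℂ] g) ξ‖₊ : ℝ≥0∞)
      ≤ c2 * (T₁ ξ + T₂ ξ) := by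
    intro ξ
    calc W h ξ ^ (s/2) * (‖(f ⋆[ContinuousLinearMap.mul ℝ ℂ] g) ξ‖₊ : ℝ≥0∞)
        ≤ W h ξ ^ (s/2) * ∫⁻ η, nf η * ng (ξ - η) ∂μ := mul_le_mul_right (conv_le ξ) _
      _ = ∫⁻ η, W h ξ ^ (s/2) * (nf η * ng (ξ - η)) ∂μ :=
          (lintegral_const_mul' _ _ (Wpow_ne_top h (s/2) ξ)).symm
      _ ≤ ∫⁻ η, (c2 * (W h η ^ (s/2) + W h (ξ - η) ^ (s/2))) * (nf η * ng (ξ - η)) ∂μ := by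
          apply lintegral_mono
          intro η
          exact mul_le_mul_left (peetre hs0 hh.1.le ξ η) _
      _ = ∫⁻ η, c2 * (u η * ng (ξ - η) + nf η * v (ξ - η)) ∂μ := by
          apply lintegral_congr
          intro η
          rw [hu_def, hv_def]
          ring
      _ = c2 * (T₁ ξ + T₂ ξ) := by
          rw [lintegral_const_mul' _ _ hc2]
          congr 1
          rw [hT₁_def, hT₂_def]
          exact lintegral_add_left' (hu.mul (hng_left ξ)) _
  -- Cauchy-Schwarz for T₁
  have conj22 : Real.HolderConjugate 2 2 := Real.HolderConjugate.two_two
  have CS1 : ∀ ξ, T₁ ξ ^ 2 ≤ (∫⁻ η, u η ^ 2 * W h (ξ - η) ^ (-s) ∂μ) * B := by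
    intro ξ
    have hw_left : Measurable fun η : EuclideanSpace ℝ (Fin n) => W h (ξ - η) ^ (s/2) :=
      (measurable_Wpow h (s/2)).comp (by fun_prop)
    have h1 : AEMeasurable (fun η => u η * (W h (ξ - η) ^ (s/2))⁻¹) μ :=
      hu.mul hw_left.inv.aemeasurable
    have h2 : AEMeasurable (fun η => v (ξ - η)) μ := hv_left ξ
    have hrw : T₁ ξ = ∫⁻ η, ((fun η => u η * (W h (ξ - η) ^ (s/2))⁻¹) *
        fun η => v (ξ - η)) η ∂μ := by
      apply lintegral_congr
      intro η
      rw [Pi.mul_apply]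
      have hv' : v (ξ - η) = W h (ξ - η) ^ (s/2) * ng (ξ - η) := rfl
      rw [hv', cancel_mul (Wpow_ne_zero h (s/2) (ξ - η)) (Wpow_ne_top h (s/2) (ξ - η))]
    have hCS := ENNReal.lintegral_mul_le_Lp_mul_Lq μ conj22 h1 h2
    rw [← hrw] at hCS
    refine le_trans (pow_le_pow_left' hCS 2) (le_of_eq ?_)
    rw [mul_pow, sq_half_rpow, sq_half_rpow]
    congr 1
    · apply lintegral_congr
      intro η
      rw [rpow_two_eq, mul_pow, ← ENNReal.inv_pow, pow_split (ξ - η), ← ENNReal.rpow_neg]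
    · rw [hBv]
      have e : (∫⁻ η, v (ξ - η) ^ (2:ℝ) ∂μ) = ∫⁻ η, (fun ζ => v ζ ^ 2) (ξ - η) ∂μ := by
        apply lintegral_congr; intro η; rw [rpow_two_eq]
      rw [e, lintegral_sub_left (hv.pow_const 2) ξ]
  have CS2 : ∀ ξ, T₂ ξ ^ 2 ≤ (∫⁻ η, W h η ^ (-s) * v (ξ - η) ^ 2 ∂μ) * A := by
    intro ξ
    have h1 : AEMeasurable (fun η => (W h η ^ (s/2))⁻¹ * v (ξ - η)) μ :=
      ((measurable_Wpow h (s/2)).inv.aemeasurable).mul (hv_left ξ)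
    have hrw : T₂ ξ = ∫⁻ η, (((fun η => (W h η ^ (s/2))⁻¹ * v (ξ - η)) * fun η => u η :
        EuclideanSpace ℝ (Fin n) → ℝ≥0∞)) η ∂μ := by
      apply lintegral_congr
      intro η
      rw [Pi.mul_apply]
      have hu' : u η = W h η ^ (s/2) * nf η := rfl
      rw [hu', cancel_mul' (Wpow_ne_zero h (s/2) η) (Wpow_ne_top h (s/2) η)]
    have hCS := ENNReal.lintegral_mul_le_Lp_mul_Lq μ conj22 h1 hu
    rw [← hrw] at hCS
    refine le_trans (pow_le_pow_left' hCS 2) (le_of_eq ?_)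
    rw [mul_pow, sq_half_rpow, sq_half_rpow]
    congr 1
    · apply lintegral_congr
      intro η
      rw [rpow_two_eq, mul_pow, ← ENNReal.inv_pow, pow_split η, ← ENNReal.rpow_neg]
    · rw [hAu]
      apply lintegral_congr; intro η; rw [rpow_two_eq]
  -- product measurability
  have qmp_sub_prod : Measure.QuasiMeasurePreserving
      (fun p : EuclideanSpace ℝ (Fin n) × EuclideanSpace ℝ (Fin n) => p.1 - p.2)
      (μ.prod μ) μ :=
    Measure.quasiMeasurePreserving_fst.comp
      (measurePreserving_sub_prod μ μ).quasiMeasurePreserving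
  have hm1 : AEMeasurable (Function.uncurry fun ξ η => u η ^ 2 * W h (ξ - η) ^ (-s))
      (μ.prod μ) :=
    (hu.pow_const 2).comp_snd.mul (((measurable_Wpow h (-s)).comp measurable_sub).aemeasurable)
  have hm2 : AEMeasurable (Function.uncurry fun ξ η => W h η ^ (-s) * v (ξ - η) ^ 2)
      (μ.prod μ) :=
    ((measurable_Wpow h (-s)).aemeasurable.comp_snd).mul
      ((hv.pow_const 2).comp_quasiMeasurePreserving qmp_sub_prod)
  have hprod1 : AEMeasurable (fun p : EuclideanSpace ℝ (Fin n) × EuclideanSpace ℝ (Fin n) =>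
      u p.2 * ng (p.1 - p.2)) (μ.prod μ) :=
    hu.comp_snd.mul (hng.comp_quasiMeasurePreserving qmp_sub_prod)
  have hprod2 : AEMeasurable (fun p : EuclideanSpace ℝ (Fin n) × EuclideanSpace ℝ (Fin n) =>
      nf p.2 * v (p.1 - p.2)) (μ.prod μ) :=
    hnf.comp_snd.mul (hv.comp_quasiMeasurePreserving qmp_sub_prod)
  have hT₁m : AEMeasurable T₁ μ := aemeasurable_lintegral_right hprod1
  have hT₂m : AEMeasurable T₂ μ := aemeasurable_lintegral_right hprod2
  have hK1m : AEMeasurable (fun ξ => ∫⁻ η, u η ^ 2 * W h (ξ - η) ^ (-s) ∂μ) μ :=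
    aemeasurable_lintegral_right hm1
  have hK2m : AEMeasurable (fun ξ => ∫⁻ η, W h η ^ (-s) * v (ξ - η) ^ 2 ∂μ) μ :=
    aemeasurable_lintegral_right hm2
  -- Tonelli computations
  have E1 : (∫⁻ ξ, (∫⁻ η, u η ^ 2 * W h (ξ - η) ^ (-s) ∂μ) ∂μ) = A * Ih := by
    rw [lintegral_lintegral_swap hm1]
    calc (∫⁻ η, ∫⁻ ξ, u η ^ 2 * W h (ξ - η) ^ (-s) ∂μ ∂μ)
        = ∫⁻ η, u η ^ 2 * Ih ∂μ := by
          apply lintegral_congr; intro η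
          rw [lintegral_const_mul' _ _ (ENNReal.pow_ne_top (hu_fin η))]
          congr 1
          exact lintegral_sub_right_eq_self (fun ζ => W h ζ ^ (-s)) η
      _ = A * Ih := by rw [hAu]; exact lintegral_mul_const'' Ih (hu.pow_const 2)
  have E2 : (∫⁻ ξ, (∫⁻ η, W h η ^ (-s) * v (ξ - η) ^ 2 ∂μ) ∂μ) = Ih * B := by
    rw [lintegral_lintegral_swap hm2]
    calc (∫⁻ η, ∫⁻ ξ, W h η ^ (-s) * v (ξ - η) ^ 2 ∂μ ∂μ)
        = ∫⁻ η, W h η ^ (-s) * B ∂μ := by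
          apply lintegral_congr; intro η
          rw [lintegral_const_mul' _ _ (Wpow_ne_top h (-s) η), hBv]
          congr 1
          exact lintegral_sub_right_eq_self (fun ζ => v ζ ^ 2) η
      _ = Ih * B := lintegral_mul_const'' B (measurable_Wpow h (-s)).aemeasurable
  have hc24 : (c2 ^ 2 * 4 : ℝ≥0∞) ≠ ⊤ :=
    ENNReal.mul_ne_top (ENNReal.pow_ne_top hc2) (by norm_num)
  calc (∫⁻ ξ, W h ξ ^ s * (‖(f ⋆[ContinuousLinearMap.mul ℝ ℂ] g) ξ‖₊ : ℝ≥0∞) ^ 2 ∂μ)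
      = ∫⁻ ξ, (W h ξ ^ (s/2) * (‖(f ⋆[ContinuousLinearMap.mul ℝ ℂ] g) ξ‖₊ : ℝ≥0∞)) ^ 2 ∂μ := by
        apply lintegral_congr; intro ξ
        rw [mul_pow, pow_split ξ]
    _ ≤ ∫⁻ ξ, (c2 * (T₁ ξ + T₂ ξ)) ^ 2 ∂μ :=
        lintegral_mono fun ξ => pow_le_pow_left' (step1 ξ) 2
    _ ≤ ∫⁻ ξ, c2 ^ 2 * 4 * (T₁ ξ ^ 2 + T₂ ξ ^ 2) ∂μ := by
        apply lintegral_mono; intro ξ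
        show (c2 * (T₁ ξ + T₂ ξ)) ^ 2 ≤ c2 ^ 2 * 4 * (T₁ ξ ^ 2 + T₂ ξ ^ 2)
        rw [mul_pow, mul_assoc]
        exact mul_le_mul_right (sq_add_le _ _) _
    _ = c2 ^ 2 * 4 * (∫⁻ ξ, T₁ ξ ^ 2 ∂μ + ∫⁻ ξ, T₂ ξ ^ 2 ∂μ) := by
        rw [lintegral_const_mul' _ _ hc24, lintegral_add_left' (hT₁m.pow_const 2)]
    _ ≤ c2 ^ 2 * 4 * ((A * Ih) * B + (Ih * B) * A) := by
        apply mul_le_mul_right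
        apply add_le_add
        · calc (∫⁻ ξ, T₁ ξ ^ 2 ∂μ)
              ≤ ∫⁻ ξ, (∫⁻ η, u η ^ 2 * W h (ξ - η) ^ (-s) ∂μ) * B ∂μ := lintegral_mono CS1
            _ = (A * Ih) * B := by rw [lintegral_mul_const'' B hK1m, E1]
        · calc (∫⁻ ξ, T₂ ξ ^ 2 ∂μ)
              ≤ ∫⁻ ξ, (∫⁻ η, W h η ^ (-s) * v (ξ - η) ^ 2 ∂μ) * A ∂μ := lintegral_mono CS2
            _ = (Ih * B) * A := by rw [lintegral_mul_const'' A hK2m, E2]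
    _ = c2 ^ 2 * 8 * Ih * A * B := by ring

end KeyLemma

theorem stmt_1 (n : ℕ) (s : ℝ) (hs : s > n / 2) :
    ∃ C > 0, ∀ h : ℝ, h ∈ Set.Ioc (0 : ℝ) 1 →
      ∀ f g : EuclideanSpace ℝ (Fin n) → ℂ,
        AEStronglyMeasurable f volume → AEStronglyMeasurable g volume →
        Integrable (fun ξ => (1 + h ^ 2 * ‖ξ‖ ^ 2) ^ s * ‖f ξ‖ ^ 2) volume →
        Integrable (fun ξ => (1 + h ^ 2 * ‖ξ‖ ^ 2) ^ s * ‖g ξ‖ ^ 2) volume →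
        Integrable (fun ξ =>
            (1 + h ^ 2 * ‖ξ‖ ^ 2) ^ s *
              ‖(f ⋆[ContinuousLinearMap.mul ℝ ℂ] g) ξ‖ ^ 2) volume ∧
        (∫ ξ, (1 + h ^ 2 * ‖ξ‖ ^ 2) ^ s *
              ‖(f ⋆[ContinuousLinearMap.mul ℝ ℂ] g) ξ‖ ^ 2) ^ (1 / 2 : ℝ) ≤
          C * h ^ (-(n : ℝ) / 2) *
            ((∫ ξ, (1 + h ^ 2 * ‖ξ‖ ^ 2) ^ s * ‖f ξ‖ ^ 2) ^ (1 / 2 : ℝ) *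
             (∫ ξ, (1 + h ^ 2 * ‖ξ‖ ^ 2) ^ s * ‖g ξ‖ ^ 2) ^ (1 / 2 : ℝ)) := by
  have hs0 : 0 ≤ s := le_trans (by positivity) hs.le
  set I1 := ∫⁻ ξ : EuclideanSpace ℝ (Fin n), SobAux.W 1 ξ ^ (-s) with hI1def
  have hI1top : I1 ≠ ⊤ := (SobAux.I1_lt_top hs).ne
  refine ⟨(((2:ℝ) ^ s) ^ 2 * 8 * (I1.toReal + 1)) ^ (1/2 : ℝ), by positivity, ?_⟩
  intro h hh f g hf hg hfi hgi
  have hb : ∀ ξ : EuclideanSpace ℝ (Fin n), (0:ℝ) < 1 + h ^ 2 * ‖ξ‖ ^ 2 := SobAux.base_pos h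
  have ofReal_eq : ∀ (F : EuclideanSpace ℝ (Fin n) → ℂ) (ξ : EuclideanSpace ℝ (Fin n)),
      ENNReal.ofReal ((1 + h ^ 2 * ‖ξ‖ ^ 2) ^ s * ‖F ξ‖ ^ 2) =
        SobAux.W h ξ ^ s * (‖F ξ‖₊ : ℝ≥0∞) ^ 2 := by
    intro F ξ
    rw [ENNReal.ofReal_mul (Real.rpow_nonneg (hb ξ).le s),
      ← ENNReal.ofReal_rpow_of_pos (hb ξ), ENNReal.ofReal_pow (norm_nonneg _),
      ofReal_norm_eq_enorm]
    rfl
  have hconv : AEStronglyMeasurable (f ⋆[ContinuousLinearMap.mul ℝ ℂ] g) volume :=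
    (hf.convolution_integrand (ContinuousLinearMap.mul ℝ ℂ) hg).integral_prod_right'
  have hwmeas : Measurable fun ξ : EuclideanSpace ℝ (Fin n) => (1 + h ^ 2 * ‖ξ‖ ^ 2) ^ s := by
    fun_prop
  have hASM : ∀ (F : EuclideanSpace ℝ (Fin n) → ℂ), AEStronglyMeasurable F volume →
      AEStronglyMeasurable (fun ξ => (1 + h ^ 2 * ‖ξ‖ ^ 2) ^ s * ‖F ξ‖ ^ 2) volume := by
    intro F hF
    exact (hwmeas.aemeasurable.mul ((hF.norm.aemeasurable).pow_const 2)).aestronglyMeasurable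
  have int_eq : ∀ (F : EuclideanSpace ℝ (Fin n) → ℂ), AEStronglyMeasurable F volume →
      (∫ ξ, (1 + h ^ 2 * ‖ξ‖ ^ 2) ^ s * ‖F ξ‖ ^ 2) =
        (∫⁻ ξ, SobAux.W h ξ ^ s * (‖F ξ‖₊ : ℝ≥0∞) ^ 2).toReal := by
    intro F hF
    rw [integral_eq_lintegral_of_nonneg_ae (ae_of_all _ fun ξ => by positivity) (hASM F hF)]
    congr 1
    exact lintegral_congr (ofReal_eq F)
  have lint_eq : ∀ (F : EuclideanSpace ℝ (Fin n) → ℂ),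
      (∫⁻ ξ, (‖(1 + h ^ 2 * ‖ξ‖ ^ 2) ^ s * ‖F ξ‖ ^ 2‖₊ : ℝ≥0∞)) =
        ∫⁻ ξ, SobAux.W h ξ ^ s * (‖F ξ‖₊ : ℝ≥0∞) ^ 2 := by
    intro F
    refine (lintegral_enorm_of_nonneg (fun ξ => by positivity)).trans ?_
    exact lintegral_congr (ofReal_eq F)
  set A := ∫⁻ ξ, SobAux.W h ξ ^ s * (‖f ξ‖₊ : ℝ≥0∞) ^ 2 with hA_def
  set B := ∫⁻ ξ, SobAux.W h ξ ^ s * (‖g ξ‖₊ : ℝ≥0∞) ^ 2 with hB_def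
  set L := ∫⁻ ξ, SobAux.W h ξ ^ s *
      (‖(f ⋆[ContinuousLinearMap.mul ℝ ℂ] g) ξ‖₊ : ℝ≥0∞) ^ 2 with hL_def
  have hAfin : A ≠ ⊤ := by
    have h1 := hfi.hasFiniteIntegral
    have h2 : (∫⁻ ξ, (‖(1 + h ^ 2 * ‖ξ‖ ^ 2) ^ s * ‖f ξ‖ ^ 2‖₊ : ℝ≥0∞)) < ⊤ := h1
    rw [lint_eq f] at h2
    exact h2.ne
  have hBfin : B ≠ ⊤ := by
    have h1 := hgi.hasFiniteIntegral
    have h2 : (∫⁻ ξ, (‖(1 + h ^ 2 * ‖ξ‖ ^ 2) ^ s * ‖g ξ‖ ^ 2‖₊ : ℝ≥0∞)) < ⊤ := h1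
    rw [lint_eq g] at h2
    exact h2.ne
  have hkey := sobolev_key hs hh hf hg
  have hIh := SobAux.Ih_eq (n := n) (s := s) hh.1
  set K : ℝ := ((2:ℝ) ^ s) ^ 2 * 8 * (I1.toReal + 1) * h ^ (-(n:ℝ)) with hK_def
  have hh0 : (0:ℝ) < h := hh.1
  have hKpos : 0 ≤ K := by positivity
  have hbound : L ≤ ENNReal.ofReal K * A * B := by
    refine hkey.trans ?_
    rw [hIh]
    have hI1le : I1 ≤ ENNReal.ofReal (I1.toReal + 1) :=
      le_trans (le_of_eq (ENNReal.ofReal_toReal hI1top).symm)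
        (ENNReal.ofReal_le_ofReal (by linarith))
    have h1 : ENNReal.ofReal ((2:ℝ) ^ s) ^ 2 * 8 * (ENNReal.ofReal (h ^ (-(n:ℝ))) * I1)
        ≤ ENNReal.ofReal K := by
      calc ENNReal.ofReal ((2:ℝ) ^ s) ^ 2 * 8 * (ENNReal.ofReal (h ^ (-(n:ℝ))) * I1)
          ≤ ENNReal.ofReal ((2:ℝ) ^ s) ^ 2 * 8 *
              (ENNReal.ofReal (h ^ (-(n:ℝ))) * ENNReal.ofReal (I1.toReal + 1)) :=
            mul_le_mul_right (mul_le_mul_right hI1le _) _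
        _ = ENNReal.ofReal K := by
            rw [← ENNReal.ofReal_pow (by positivity),
              show ((8:ℝ≥0∞) = ENNReal.ofReal 8) by norm_num,
              ← ENNReal.ofReal_mul (by positivity), ← ENNReal.ofReal_mul (by positivity),
              ← ENNReal.ofReal_mul (by positivity)]
            congr 1
            ring
    exact mul_le_mul_left (mul_le_mul_left h1 A) B
  have hRHSfin : ENNReal.ofReal K * A * B ≠ ⊤ :=
    ENNReal.mul_ne_top (ENNReal.mul_ne_top ENNReal.ofReal_ne_top hAfin) hBfin
  have hLfin : L ≠ ⊤ := (lt_of_le_of_lt hbound (lt_top_iff_ne_top.mpr hRHSfin)).ne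
  constructor
  · refine ⟨hASM _ hconv, ?_⟩
    show (∫⁻ ξ, (‖(1 + h ^ 2 * ‖ξ‖ ^ 2) ^ s *
        ‖(f ⋆[ContinuousLinearMap.mul ℝ ℂ] g) ξ‖ ^ 2‖₊ : ℝ≥0∞)) < ⊤
    rw [lint_eq]
    exact lt_top_iff_ne_top.mpr hLfin
  · rw [int_eq f hf, int_eq g hg, int_eq _ hconv]
    have ht : L.toReal ≤ K * A.toReal * B.toReal := by
      have h1 := ENNReal.toReal_mono hRHSfin hbound
      rwa [ENNReal.toReal_mul, ENNReal.toReal_mul, ENNReal.toReal_ofReal hKpos] at h1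
    calc L.toReal ^ (1/2:ℝ)
        ≤ (K * A.toReal * B.toReal) ^ (1/2:ℝ) :=
          Real.rpow_le_rpow ENNReal.toReal_nonneg ht (by norm_num)
      _ = (((2:ℝ) ^ s) ^ 2 * 8 * (I1.toReal + 1)) ^ (1/2:ℝ) * h ^ (-(n:ℝ) / 2) *
            (A.toReal ^ (1/2:ℝ) * B.toReal ^ (1/2:ℝ)) := by
          rw [Real.mul_rpow (by positivity) ENNReal.toReal_nonneg,
            Real.mul_rpow (by positivity) ENNReal.toReal_nonneg, hK_def,
            Real.mul_rpow (by positivity) (Real.rpow_nonneg hh0.le _),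
            ← Real.rpow_mul hh0.le]
          have he : (-(n:ℝ)) * (1/2 : ℝ) = -(n:ℝ) / 2 := by ring
          rw [he]
          ring
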